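/- Suppose k ∈ {1, 2, 3}, ‖·‖ is any unitary similarity invariant norm on 3×3 complex matrices, and X is a 3×3 density matrix. Then d(X, D_{3,k}) ≤ d((1/3)·I_3, D_{3,k}). -/

import Mathlib

open Matrix BigOperators Finset
open scoped ComplexOrder

/-- The singular values of a square complex matrix. -/
noncomputable def singVals {n : ℕ} (A : Matrix (Fin n) (Fin n) ℂ) : Fin n → ℝ :=
  fun i => Real.sqrt ((Matrix.isHermitian_conjTranspose_mul_self A).eigenvalues i)

/-- The trace norm: the sum of singular values. -/
noncomputable def traceNorm {n : ℕ} (A : Matrix (Fin n) (Fin n) ℂ) : ℝ :=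
  ∑ i, singVals A i

/-- A density matrix: positive semidefinite with trace 1. -/
def IsDensity {n : ℕ} (X : Matrix (Fin n) (Fin n) ℂ) : Prop :=
  X.PosSemidef ∧ X.trace = 1

/-- Distance from `X` to the set of density matrices of rank at most `k`,
measured via a given norm `N`. -/
noncomputable def distToLowRank {n : ℕ} (N : Matrix (Fin n) (Fin n) ℂ → ℝ) (k : ℕ)
    (X : Matrix (Fin n) (Fin n) ℂ) : ℝ :=
  sInf {t | ∃ Y : Matrix (Fin n) (Fin n) ℂ, IsDensity Y ∧ Y.rank ≤ k ∧ t = N (X - Y)}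

namespace Stmt7Aux

abbrev M3 := Matrix (Fin 3) (Fin 3) ℂ

section infra
variable {N : M3 → ℝ}

lemma N_zero (hN_def : ∀ A, N A = 0 ↔ A = 0) : N 0 = 0 := (hN_def 0).2 rfl

lemma N_neg (hN_smul : ∀ (c : ℂ) A, N (c • A) = ‖c‖ * N A) (A : M3) : N (-A) = N A := by
  rw [← neg_one_smul ℂ A, hN_smul]; simp

lemma N_nonneg (hN_tri : ∀ A B, N (A + B) ≤ N A + N B)
    (hN_smul : ∀ (c : ℂ) A, N (c • A) = ‖c‖ * N A)
    (hN_def : ∀ A, N A = 0 ↔ A = 0) (A : M3) : 0 ≤ N A := by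
  have h0 : N 0 = 0 := N_zero hN_def
  have h := hN_tri A (-A)
  rw [add_neg_cancel, h0, N_neg hN_smul] at h
  linarith

lemma N_conj (hN_usi : ∀ (A U : M3), U ∈ Matrix.unitaryGroup (Fin 3) ℂ → N (Uᴴ * A * U) = N A)
    {U : M3} (hU : U ∈ Matrix.unitaryGroup (Fin 3) ℂ) (A : M3) :
    N (U * A * Uᴴ) = N A := by
  have hU' : Uᴴ ∈ Matrix.unitaryGroup (Fin 3) ℂ := by
    rw [← Matrix.star_eq_conjTranspose]; exact Unitary.star_mem hU
  simpa using hN_usi A Uᴴ hU'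

lemma N_real_smul (hN_smul : ∀ (c : ℂ) A, N (c • A) = ‖c‖ * N A)
    {r : ℝ} (hr : 0 ≤ r) (A : M3) : N (((r : ℂ)) • A) = r * N A := by
  rw [hN_smul]; simp [Complex.norm_real, abs_of_nonneg hr]

lemma comb_bound (hN_tri : ∀ A B, N (A + B) ≤ N A + N B)
    (hN_smul : ∀ (c : ℂ) A, N (c • A) = ‖c‖ * N A)
    {p q r : ℝ} (hp : 0 ≤ p) (hq : 0 ≤ q) (hr : 0 ≤ r) (hpqr : p + q + r = 1)
    {A B1 B2 B3 C : M3} (h1 : N B1 = N C) (h2 : N B2 = N C) (h3 : N B3 = N C)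
    (hA : A = ((p : ℂ)) • B1 + ((q : ℂ)) • B2 + ((r : ℂ)) • B3) : N A ≤ N C := by
  have t1 := hN_tri (((p:ℂ)) • B1 + ((q:ℂ)) • B2) (((r:ℂ)) • B3)
  have t2 := hN_tri (((p:ℂ)) • B1) (((q:ℂ)) • B2)
  rw [N_real_smul hN_smul hp, N_real_smul hN_smul hq, h1, h2] at t2
  rw [N_real_smul hN_smul hr, h3] at t1
  rw [hA]
  have hfin : p * N C + q * N C + r * N C = N C := by
    rw [← add_mul, ← add_mul, hpqr, one_mul]
  linarith

end infra

section perm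

lemma permM_conjTranspose (σ : Equiv.Perm (Fin 3)) :
    (σ.permMatrix ℂ)ᴴ = (σ⁻¹).permMatrix ℂ := by
  ext i j
  simp only [Equiv.Perm.permMatrix, PEquiv.toMatrix_apply, Equiv.toPEquiv_apply,
    Matrix.conjTranspose_apply, Option.mem_def, Option.some.injEq, apply_ite (starRingEnd ℂ),
    _root_.map_one, _root_.map_zero]
  simp [eq_comm, Equiv.eq_symm_apply, Equiv.Perm.inv_def]

lemma permM_mem (σ : Equiv.Perm (Fin 3)) :
    σ.permMatrix ℂ ∈ Matrix.unitaryGroup (Fin 3) ℂ := by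
  rw [Matrix.mem_unitaryGroup_iff']
  rw [Matrix.star_eq_conjTranspose, permM_conjTranspose]
  show ((σ⁻¹).toPEquiv.toMatrix : M3) * σ.toPEquiv.toMatrix = 1
  rw [PEquiv.toMatrix_toPEquiv_mul]
  ext i j
  simp [PEquiv.toMatrix_apply, Equiv.toPEquiv_apply, Matrix.one_apply,
    Matrix.submatrix_apply, Equiv.Perm.inv_def, Equiv.apply_eq_iff_eq_symm_apply, eq_comm]

lemma permM_conj_diag (σ : Equiv.Perm (Fin 3)) (d : Fin 3 → ℂ) :
    ((σ⁻¹).permMatrix ℂ)ᴴ * Matrix.diagonal d * ((σ⁻¹).permMatrix ℂ)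
      = Matrix.diagonal (d ∘ σ) := by
  rw [permM_conjTranspose, inv_inv]
  show (σ.toPEquiv.toMatrix : M3) * _ * ((σ⁻¹).toPEquiv.toMatrix) = _
  rw [PEquiv.toMatrix_toPEquiv_mul, PEquiv.mul_toMatrix_toPEquiv]
  ext i j
  by_cases h : i = j
  · subst h; simp [Matrix.diagonal_apply, Matrix.submatrix_apply, Equiv.Perm.inv_def]
  · simp only [Matrix.diagonal_apply, Matrix.submatrix_apply, Equiv.Perm.inv_def, Equiv.symm_symm,
      Function.comp_apply, id_eq, if_neg h]
    rw [if_neg]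
    exact fun hc => h (σ.injective hc)

variable {N : M3 → ℝ}

lemma N_diag_perm (hN_usi : ∀ (A U : M3), U ∈ Matrix.unitaryGroup (Fin 3) ℂ → N (Uᴴ * A * U) = N A)
    (d : Fin 3 → ℂ) (σ : Equiv.Perm (Fin 3)) :
    N (Matrix.diagonal (d ∘ σ)) = N (Matrix.diagonal d) := by
  rw [← permM_conj_diag σ d]
  exact hN_usi _ _ (permM_mem σ⁻¹)

end perm

section spectral

lemma trace_conj_diag {U : M3} (hU : U ∈ Matrix.unitaryGroup (Fin 3) ℂ) (d : Fin 3 → ℂ) :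
    (U * Matrix.diagonal d * Uᴴ).trace = ∑ i, d i := by
  rw [Matrix.trace_mul_cycle, ← Matrix.star_eq_conjTranspose,
    Matrix.mem_unitaryGroup_iff'.mp hU, one_mul, Matrix.trace_diagonal]

lemma rank_conj_diag {U : M3} (hU : U ∈ Matrix.unitaryGroup (Fin 3) ℂ) (d : Fin 3 → ℂ) :
    (U * Matrix.diagonal d * Uᴴ).rank = (Matrix.diagonal d).rank := by
  have hU' : Uᴴ ∈ Matrix.unitaryGroup (Fin 3) ℂ := by
    rw [← Matrix.star_eq_conjTranspose]; exact Unitary.star_mem hU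
  rw [Matrix.rank_mul_eq_left_of_isUnit_det Uᴴ _ (Matrix.UnitaryGroup.det_isUnit ⟨Uᴴ, hU'⟩),
    Matrix.rank_mul_eq_right_of_isUnit_det U _ (Matrix.UnitaryGroup.det_isUnit ⟨U, hU⟩)]

lemma density_decomp {A : M3} (hA : IsDensity A) :
    ∃ (U : M3) (x : Fin 3 → ℝ), U ∈ Matrix.unitaryGroup (Fin 3) ℂ ∧
      A = U * Matrix.diagonal (fun i => (x i : ℂ)) * Uᴴ ∧ (∀ i, 0 ≤ x i) ∧ (∑ i, x i = 1) ∧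
      A.rank = Fintype.card {i // x i ≠ 0} := by
  have hH : A.IsHermitian := hA.1.1
  refine ⟨hH.eigenvectorUnitary, hH.eigenvalues, (hH.eigenvectorUnitary).2, ?_, ?_, ?_, ?_⟩
  · have h := hH.spectral_theorem
    rw [Unitary.conjStarAlgAut_apply, Matrix.star_eq_conjTranspose] at h
    exact h
  · exact hA.1.eigenvalues_nonneg
  · have h1 : A.trace = ∑ i, ((hH.eigenvalues i : ℂ)) := by
      nth_rw 1 [hH.spectral_theorem]
      rw [Unitary.conjStarAlgAut_apply, Matrix.star_eq_conjTranspose]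
      exact trace_conj_diag (hH.eigenvectorUnitary).2 _
    rw [hA.2] at h1
    have : ((∑ i, hH.eigenvalues i : ℝ) : ℂ) = 1 := by push_cast; rw [h1]
    exact_mod_cast this
  · exact hH.rank_eq_card_non_zero_eigs

lemma construct_density {U : M3} (hU : U ∈ Matrix.unitaryGroup (Fin 3) ℂ)
    (y : Fin 3 → ℝ) (hy : ∀ i, 0 ≤ y i) (hsum : ∑ i, y i = 1)
    (S : Finset (Fin 3)) (hsupp : ∀ i, i ∉ S → y i = 0) :
    IsDensity (U * Matrix.diagonal (fun i => (y i : ℂ)) * Uᴴ) ∧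
      (U * Matrix.diagonal (fun i => (y i : ℂ)) * Uᴴ).rank ≤ S.card := by
  have hdpsd : (Matrix.diagonal (fun i => (y i : ℂ))).PosSemidef := by
    refine Matrix.PosSemidef.diagonal ?_
    intro i
    simp only [Pi.zero_apply]
    exact Complex.zero_le_real.mpr (hy i)
  refine ⟨⟨hdpsd.mul_mul_conjTranspose_same U, ?_⟩, ?_⟩
  · rw [trace_conj_diag hU]
    exact_mod_cast congrArg (Complex.ofReal) hsum
  · rw [rank_conj_diag hU, Matrix.rank_diagonal]
    rw [Fintype.card_subtype]
    apply Finset.card_le_card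
    intro i hi
    simp only [Finset.mem_filter] at hi
    by_contra hiS
    exact hi.2 (by exact_mod_cast congrArg (Complex.ofReal) (hsupp i hiS))

end spectral

lemma sort3 (v : Fin 3 → ℝ) :
    ∃ σ : Equiv.Perm (Fin 3), v (σ 1) ≤ v (σ 0) ∧ v (σ 2) ≤ v (σ 1) := by
  rcases le_total (v 0) (v 1) with h01 | h01 <;>
    rcases le_total (v 0) (v 2) with h02 | h02 <;>
    rcases le_total (v 1) (v 2) with h12 | h12
  · exact ⟨Equiv.swap 0 2, by simpa [Equiv.swap_apply_def] using h12,
      by simpa [Equiv.swap_apply_def] using h01⟩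
  · exact ⟨Equiv.swap 0 1 * Equiv.swap 1 2,
      by simpa [Equiv.Perm.mul_apply, Equiv.swap_apply_def] using h12,
      by simpa [Equiv.Perm.mul_apply, Equiv.swap_apply_def] using h02⟩
  · exact ⟨Equiv.swap 0 1, by simpa [Equiv.swap_apply_def] using h01,
      by simpa [Equiv.swap_apply_def] using h02⟩
  · exact ⟨Equiv.swap 0 1, by simpa [Equiv.swap_apply_def] using h01,
      by simpa [Equiv.swap_apply_def] using h02⟩
  · exact ⟨Equiv.swap 1 2 * Equiv.swap 0 1,
      by simpa [Equiv.Perm.mul_apply, Equiv.swap_apply_def] using h02,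
      by simpa [Equiv.Perm.mul_apply, Equiv.swap_apply_def] using h01⟩
  · exact ⟨Equiv.swap 1 2 * Equiv.swap 0 1,
      by simpa [Equiv.Perm.mul_apply, Equiv.swap_apply_def] using h02,
      by simpa [Equiv.Perm.mul_apply, Equiv.swap_apply_def] using h01⟩
  · exact ⟨Equiv.swap 1 2, by simpa [Equiv.swap_apply_def] using h02,
      by simpa [Equiv.swap_apply_def] using h12⟩
  · exact ⟨1, by simpa using h01, by simpa using h12⟩

section buildY
variable {N : M3 → ℝ}

lemma build_Y
    (hN_usi : ∀ (A U : M3), U ∈ Matrix.unitaryGroup (Fin 3) ℂ → N (Uᴴ * A * U) = N A)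
    {X U : M3} (hU : U ∈ Matrix.unitaryGroup (Fin 3) ℂ) {x : Fin 3 → ℝ}
    (hXeq : X = U * Matrix.diagonal (fun i => (x i : ℂ)) * Uᴴ)
    (σ : Equiv.Perm (Fin 3)) (y' : Fin 3 → ℝ) (hy : ∀ i, 0 ≤ y' i) (hsum : ∑ i, y' i = 1)
    (S : Finset (Fin 3)) (hsupp : ∀ i, i ∉ S → y' i = 0) (k : ℕ) (hS : S.card ≤ k) :
    ∃ Y : M3, IsDensity Y ∧ Y.rank ≤ k ∧
      N (X - Y) = N (Matrix.diagonal (fun i => ((x (σ i) : ℂ) - (y' i : ℂ)))) := by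
  set Y : M3 := U * Matrix.diagonal (fun i => (y' (σ⁻¹ i) : ℂ)) * Uᴴ with hY
  have hsum' : ∑ i, y' (σ⁻¹ i) = 1 := by
    rw [Equiv.sum_comp σ⁻¹ y']; exact hsum
  have hsupp' : ∀ i, i ∉ S.image σ → y' (σ⁻¹ i) = 0 := by
    intro i hi
    apply hsupp
    intro hmem
    exact hi (Finset.mem_image.mpr ⟨σ⁻¹ i, hmem, by simp⟩)
  obtain ⟨hYd, hYr⟩ := construct_density hU (fun i => y' (σ⁻¹ i)) (fun i => hy _) hsum'
    (S.image σ) hsupp'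
  refine ⟨Y, hYd, le_trans hYr (le_trans (Finset.card_image_le) hS), ?_⟩
  have hXY : X - Y = U * Matrix.diagonal (fun i => ((x i : ℂ) - (y' (σ⁻¹ i) : ℂ))) * Uᴴ := by
    rw [hXeq, hY, ← Matrix.sub_mul, ← Matrix.mul_sub, Matrix.diagonal_sub]
  rw [hXY, N_conj hN_usi hU]
  have : (fun i => ((x i : ℂ) - (y' (σ⁻¹ i) : ℂ))) ∘ σ
      = fun i => ((x (σ i) : ℂ) - (y' i : ℂ)) := by
    funext i; simp
  rw [← this, N_diag_perm hN_usi]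

end buildY

section keylemma
variable {N : M3 → ℝ}

lemma two_nonzero_card {z : Fin 3 → ℝ} {a b : Fin 3} (hab : a ≠ b)
    (ha : z a ≠ 0) (hb : z b ≠ 0) : 2 ≤ Fintype.card {i // z i ≠ 0} := by
  classical
  rw [Fintype.card_subtype]
  have : ({a, b} : Finset (Fin 3)) ⊆ Finset.univ.filter (fun i => z i ≠ 0) := by
    intro i hi
    simp only [Finset.mem_insert, Finset.mem_singleton] at hi
    rcases hi with rfl | rfl <;> simp [ha, hb]
  calc 2 = ({a, b} : Finset (Fin 3)).card := (Finset.card_pair hab).symm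
    _ ≤ _ := Finset.card_le_card this

lemma three_nonzero_card {z : Fin 3 → ℝ} {a b c : Fin 3} (hab : a ≠ b) (hac : a ≠ c)
    (hbc : b ≠ c) (ha : z a ≠ 0) (hb : z b ≠ 0) (hc : z c ≠ 0) :
    3 ≤ Fintype.card {i // z i ≠ 0} := by
  classical
  rw [Fintype.card_subtype]
  have : ({a, b, c} : Finset (Fin 3)) ⊆ Finset.univ.filter (fun i => z i ≠ 0) := by
    intro i hi
    simp only [Finset.mem_insert, Finset.mem_singleton] at hi
    rcases hi with rfl | rfl | rfl <;> simp [ha, hb, hc]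
  calc 3 = ({a, b, c} : Finset (Fin 3)).card := by
        rw [Finset.card_insert_of_notMem (by simp [hab, hac]),
          Finset.card_pair hbc]
    _ ≤ _ := Finset.card_le_card this

set_option maxHeartbeats 1000000 in
lemma key_approx
    (hN_tri : ∀ A B, N (A + B) ≤ N A + N B)
    (hN_smul : ∀ (c : ℂ) A, N (c • A) = ‖c‖ * N A)
    (hN_def : ∀ A, N A = 0 ↔ A = 0)
    (hN_usi : ∀ (A U : M3), U ∈ Matrix.unitaryGroup (Fin 3) ℂ → N (Uᴴ * A * U) = N A)
    (k : ℕ) (hk1 : 1 ≤ k) (hk3 : k ≤ 3)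
    (X : M3) (hX : IsDensity X) (Z : M3) (hZ : IsDensity Z) (hZr : Z.rank ≤ k) :
    ∃ Y : M3, IsDensity Y ∧ Y.rank ≤ k ∧
      N (X - Y) ≤ N ((1 / (3:ℂ)) • (1 : M3) - Z) := by
  rcases Nat.lt_or_ge k 3 with hklt | hkge
  swap
  · refine ⟨X, hX, le_trans (Matrix.rank_le_card_width X) (by simpa using hkge), ?_⟩
    simp only [sub_self]
    rw [N_zero hN_def]
    exact Stmt7Aux.N_nonneg hN_tri hN_smul hN_def _
  obtain ⟨U, x, hU, hXeq, hx0, hxsum, _⟩ := density_decomp hX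
  obtain ⟨V, z, hV, hZeq, hz0, hzsum, hzrank⟩ := density_decomp hZ
  obtain ⟨σ, hσ1, hσ2⟩ := sort3 x
  obtain ⟨τ, hτ1, hτ2⟩ := sort3 z
  have hxs : x (σ 0) + x (σ 1) + x (σ 2) = 1 := by
    rw [← hxsum, ← Equiv.sum_comp σ x, Fin.sum_univ_three]
  have hzs : z (τ 0) + z (τ 1) + z (τ 2) = 1 := by
    rw [← hzsum, ← Equiv.sum_comp τ z, Fin.sum_univ_three]
  have hzt0pos : 0 < z (τ 0) := by
    have h1 := hz0 (τ 1); have h2 := hz0 (τ 2); linarith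
  set c : Fin 3 → ℂ := fun i => (1/3 : ℂ) - (z (τ i) : ℂ) with hc
  have hRHS : N ((1 / (3:ℂ)) • (1 : M3) - Z) = N (Matrix.diagonal c) := by
    have hVV : V * Vᴴ = 1 := by
      rw [← Matrix.star_eq_conjTranspose]; exact Matrix.mem_unitaryGroup_iff.mp hV
    have h1 : (1 / (3:ℂ)) • (1 : M3) - Z
        = V * Matrix.diagonal (fun i => (1/3 : ℂ) - (z i : ℂ)) * Vᴴ := by
      rw [hZeq]
      have h2 : V * ((1 / (3:ℂ)) • (1 : M3)) * Vᴴ = (1 / (3:ℂ)) • (1 : M3) := by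
        rw [Matrix.mul_smul, Matrix.mul_one, Matrix.smul_mul, hVV]
      calc (1 / (3:ℂ)) • (1 : M3) - V * Matrix.diagonal (fun i => (z i : ℂ)) * Vᴴ
          = V * ((1 / (3:ℂ)) • (1 : M3)) * Vᴴ
            - V * Matrix.diagonal (fun i => (z i : ℂ)) * Vᴴ := by rw [h2]
        _ = V * ((1 / (3:ℂ)) • (1 : M3) - Matrix.diagonal (fun i => (z i : ℂ))) * Vᴴ := by
            rw [Matrix.mul_sub, Matrix.sub_mul]
        _ = V * Matrix.diagonal (fun i => (1/3 : ℂ) - (z i : ℂ)) * Vᴴ := by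
            rw [Matrix.smul_one_eq_diagonal, ← Matrix.diagonal_sub]
    rw [h1, N_conj hN_usi hV]
    have h3 : (fun i => (1/3 : ℂ) - (z i : ℂ)) ∘ τ = c := rfl
    rw [← h3, N_diag_perm hN_usi]
  rw [hRHS]
  interval_cases k
  · -- k = 1
    have hzτ1 : z (τ 1) = 0 := by
      by_contra h
      have := two_nonzero_card (a := τ 0) (b := τ 1)
        (fun he => (by decide : ¬ (0:Fin 3) = 1) (τ.injective he)) (ne_of_gt hzt0pos) h
      rw [← hzrank] at this
      omega
    have hzτ2 : z (τ 2) = 0 := by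
      by_contra h
      have := two_nonzero_card (a := τ 0) (b := τ 2)
        (fun he => (by decide : ¬ (0:Fin 3) = 2) (τ.injective he)) (ne_of_gt hzt0pos) h
      rw [← hzrank] at this
      omega
    have hzτ0 : z (τ 0) = 1 := by linarith
    obtain ⟨Y, hYd, hYr, hYeq⟩ := build_Y hN_usi hU hXeq σ (![1, 0, 0])
      (by intro i; fin_cases i <;> norm_num)
      (by simp [Fin.sum_univ_three])
      ({0} : Finset (Fin 3))
      (by intro i hi; fin_cases i <;> simp_all)
      1 (by simp)
    refine ⟨Y, hYd, hYr, ?_⟩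
    rw [hYeq]
    have hxsC : ((x (σ 0) : ℂ)) + (x (σ 1) : ℂ) + (x (σ 2) : ℂ) = 1 := by
      exact_mod_cast congrArg (Complex.ofReal) hxs
    refine comb_bound hN_tri hN_smul
      (p := (1 + 3 * x (σ 2)) / 2) (q := (x (σ 0) - x (σ 1)) / 2) (r := x (σ 1) - x (σ 2))
      (by nlinarith [hx0 (σ 2)]) (by nlinarith) (by nlinarith)
      (by linarith)
      (B1 := Matrix.diagonal c) (B2 := -(Matrix.diagonal c))
      (B3 := -(Matrix.diagonal (c ∘ Equiv.swap 0 1)))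
      rfl (N_neg hN_smul _) (by rw [N_neg hN_smul, N_diag_perm hN_usi]) ?_
    ext i j
    by_cases hij : i = j
    case neg =>
      simp only [Matrix.add_apply, Matrix.smul_apply, Matrix.neg_apply,
        Matrix.diagonal_apply_ne _ hij, smul_zero, neg_zero, add_zero]
    case pos =>
      subst hij
      fin_cases i
      · simp [hc, Equiv.swap_apply_def, hzτ0, hzτ1, hzτ2]
        push_cast
        linear_combination hxsC * ((2:ℂ)/3)
      · simp [hc, Equiv.swap_apply_def, hzτ0, hzτ1, hzτ2]
        push_cast
        linear_combination hxsC * ((1:ℂ)/6)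
      · simp [hc, Equiv.swap_apply_def, hzτ0, hzτ1, hzτ2]
        push_cast
        linear_combination hxsC * ((1:ℂ)/6)
  · -- k = 2
    have hzτ2 : z (τ 2) = 0 := by
      by_contra h
      have hz2pos : 0 < z (τ 2) := lt_of_le_of_ne (hz0 (τ 2)) (Ne.symm h)
      have := three_nonzero_card (a := τ 0) (b := τ 1) (c := τ 2)
        (fun he => (by decide : ¬ (0:Fin 3) = 1) (τ.injective he))
        (fun he => (by decide : ¬ (0:Fin 3) = 2) (τ.injective he))
        (fun he => (by decide : ¬ (1:Fin 3) = 2) (τ.injective he))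
        (ne_of_gt hzt0pos) (ne_of_gt (by linarith)) h
      rw [← hzrank] at this
      omega
    have hz01 : z (τ 0) + z (τ 1) = 1 := by linarith
    have hw3 : x (σ 2) ≤ 1/3 := by linarith
    obtain ⟨Y, hYd, hYr, hYeq⟩ := build_Y hN_usi hU hXeq σ
      (![x (σ 0) + x (σ 2)/2, x (σ 1) + x (σ 2)/2, 0])
      (by intro i
          fin_cases i <;> simp <;>
            linarith [hx0 (σ 0), hx0 (σ 1), hx0 (σ 2)])
      (by rw [Fin.sum_univ_three]; simp; linarith)
      ({0, 1} : Finset (Fin 3))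
      (by intro i hi; fin_cases i <;> simp_all)
      2 (by simp)
    refine ⟨Y, hYd, hYr, ?_⟩
    rw [hYeq]
    have hzsC : ((z (τ 0) : ℂ)) + (z (τ 1) : ℂ) = 1 := by
      exact_mod_cast congrArg (Complex.ofReal) hz01
    refine comb_bound hN_tri hN_smul
      (p := 1/2) (q := 3 * x (σ 2) / 2) (r := (1 - 3 * x (σ 2)) / 2)
      (by norm_num) (by linarith [hx0 (σ 2)]) (by linarith)
      (by ring)
      (B1 := Matrix.diagonal c) (B2 := Matrix.diagonal (c ∘ Equiv.swap 0 1))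
      (B3 := -(Matrix.diagonal c))
      rfl (N_diag_perm hN_usi _ _) (N_neg hN_smul _) ?_
    ext i j
    by_cases hij : i = j
    case neg =>
      simp only [Matrix.add_apply, Matrix.smul_apply, Matrix.neg_apply,
        Matrix.diagonal_apply_ne _ hij, smul_zero, neg_zero, add_zero]
    case pos =>
      subst hij
      fin_cases i
      · simp [hc, Equiv.swap_apply_def, hzτ2]
        push_cast
        linear_combination hzsC * (3 * ((x (σ 2) : ℂ)) / 2)
      · simp [hc, Equiv.swap_apply_def, hzτ2]
        push_cast
        linear_combination hzsC * (3 * ((x (σ 2) : ℂ)) / 2)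
      · simp [hc, Equiv.swap_apply_def, hzτ2]
        push_cast
        ring

end keylemma

end Stmt7Aux

theorem stmt_7 (k : ℕ) (hk1 : 1 ≤ k) (hk3 : k ≤ 3)
    (N : Matrix (Fin 3) (Fin 3) ℂ → ℝ)
    (hN_tri : ∀ A B, N (A + B) ≤ N A + N B)
    (hN_smul : ∀ (c : ℂ) A, N (c • A) = ‖c‖ * N A)
    (hN_def : ∀ A, N A = 0 ↔ A = 0)
    (hN_usi : ∀ (A U : Matrix (Fin 3) (Fin 3) ℂ),
      U ∈ Matrix.unitaryGroup (Fin 3) ℂ → N (Uᴴ * A * U) = N A)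
    (X : Matrix (Fin 3) (Fin 3) ℂ) (hX : IsDensity X) :
    distToLowRank N k X
      ≤ distToLowRank N k ((1 / (3 : ℂ)) • (1 : Matrix (Fin 3) (Fin 3) ℂ)) := by
  have h1 : (1 : Stmt7Aux.M3) ∈ Matrix.unitaryGroup (Fin 3) ℂ := one_mem _
  obtain ⟨hZ0d, hZ0r⟩ := Stmt7Aux.construct_density h1 (![1, 0, 0])
    (by intro i; fin_cases i <;> norm_num)
    (by simp [Fin.sum_univ_three])
    ({0} : Finset (Fin 3))
    (by intro i hi; fin_cases i <;> simp_all)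
  unfold distToLowRank
  apply le_csInf
  · exact ⟨_, _, hZ0d, le_trans (by simpa using hZ0r) hk1, rfl⟩
  · rintro b ⟨Z, hZd, hZr, rfl⟩
    obtain ⟨Y, hYd, hYr, hle⟩ :=
      Stmt7Aux.key_approx hN_tri hN_smul hN_def hN_usi k hk1 hk3 X hX Z hZd hZr
    refine le_trans (csInf_le ⟨0, ?_⟩ ⟨Y, hYd, hYr, rfl⟩) hle
    rintro t ⟨Y', hY', hY'r, rfl⟩
    exact Stmt7Aux.N_nonneg hN_tri hN_smul hN_def _
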